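/- Let C be a 5-element cap in (Z/2Z)^n and y the sum of all elements of C. Then every point in the exclude set of the 6-element set C ∪ {y} has multiplicity exactly 2, i.e., it can be written as a sum of a 3-element subset of C ∪ {y} in exactly two ways. -/
import Mathlib


def IsCap {n : ℕ} (S : Set (Fin n → ZMod 2)) : Prop :=
  ∀ a ∈ S, ∀ b ∈ S, ∀ c ∈ S, ∀ d ∈ S,
    a ≠ b → a ≠ c → a ≠ d → b ≠ c → b ≠ d → c ≠ d → a + b + c + d ≠ 0

def excl {n : ℕ} (S : Finset (Fin n → ZMod 2)) : Finset (Fin n → ZMod 2) :=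
  (S.powersetCard 3).image (fun t => t.sum id)

def mult {n : ℕ} (S : Finset (Fin n → ZMod 2)) (p : Fin n → ZMod 2) : ℕ :=
  ((S.powersetCard 3).filter (fun t => t.sum id = p)).card

lemma vadd_self {n : ℕ} (v : Fin n → ZMod 2) : v + v = 0 := by
  funext i
  have h : ∀ a : ZMod 2, a + a = 0 := by decide
  exact h (v i)

lemma vcancel {n : ℕ} {a b c : Fin n → ZMod 2} (h : a + b = c) : a = c + b := by
  rw [← h, add_assoc, vadd_self, add_zero]

/-- Distinct 3-subsets of a 5-cap have distinct sums. -/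
lemma three_sum_inj {n : ℕ} (C : Finset (Fin n → ZMod 2))
    (hC : IsCap (C : Set (Fin n → ZMod 2))) (hcard : C.card = 5)
    {t₁ t₂ : Finset (Fin n → ZMod 2)} (h1 : t₁ ⊆ C) (h2 : t₂ ⊆ C)
    (c1 : t₁.card = 3) (c2 : t₂.card = 3) (hs : t₁.sum id = t₂.sum id) : t₁ = t₂ := by
  have hd1 : (t₁ ∩ t₂).card + (t₁ \ t₂).card = 3 := by
    rw [Finset.card_inter_add_card_sdiff, c1]
  have hd2 : (t₁ ∩ t₂).card + (t₂ \ t₁).card = 3 := by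
    rw [Finset.inter_comm, Finset.card_inter_add_card_sdiff, c2]
  have hs1 : (t₁ ∩ t₂).sum id + (t₁ \ t₂).sum id = t₁.sum id :=
    Finset.sum_inter_add_sum_sdiff t₁ t₂ id
  have hs2 : (t₁ ∩ t₂).sum id + (t₂ \ t₁).sum id = t₂.sum id := by
    rw [Finset.inter_comm]; exact Finset.sum_inter_add_sum_sdiff t₂ t₁ id
  have hsd : (t₁ \ t₂).sum id = (t₂ \ t₁).sum id := by
    apply add_left_cancel (a := (t₁ ∩ t₂).sum id)
    rw [hs1, hs2, hs]
  have hk : (t₁ ∩ t₂).card ≤ 3 := by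
    rw [← c1]; exact Finset.card_le_card Finset.inter_subset_left
  interval_cases hkk : (t₁ ∩ t₂).card
  · -- inter empty : union too big
    exfalso
    have hu : (t₁ ∪ t₂).card = 6 := by
      have := Finset.card_union_add_card_inter t₁ t₂
      omega
    have : (t₁ ∪ t₂).card ≤ 5 := by
      rw [← hcard]; exact Finset.card_le_card (Finset.union_subset h1 h2)
    omega
  · -- diffs are pairs : cap contradiction
    exfalso
    have e1 : (t₁ \ t₂).card = 2 := by omega
    have e2 : (t₂ \ t₁).card = 2 := by omega
    obtain ⟨a, b, hab, hab'⟩ := Finset.card_eq_two.mp e1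
    obtain ⟨c, d, hcd, hcd'⟩ := Finset.card_eq_two.mp e2
    have ha : a ∈ t₁ \ t₂ := by rw [hab']; simp
    have hb : b ∈ t₁ \ t₂ := by rw [hab']; simp
    have hc : c ∈ t₂ \ t₁ := by rw [hcd']; simp
    have hd : d ∈ t₂ \ t₁ := by rw [hcd']; simp
    simp only [Finset.mem_sdiff] at ha hb hc hd
    have hsum : a + b = c + d := by
      have := hsd
      rw [hab', hcd', Finset.sum_pair hab, Finset.sum_pair hcd] at this
      simpa using this
    refine hC a (h1 ha.1) b (h1 hb.1) c (h2 hc.1) d (h2 hd.1) hab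
      (fun h => ha.2 (h ▸ hc.1)) (fun h => ha.2 (h ▸ hd.1))
      (fun h => hb.2 (h ▸ hc.1)) (fun h => hb.2 (h ▸ hd.1)) hcd ?_
    rw [add_assoc, hsum]
    exact vadd_self _
  · -- diffs are singletons : equal elements, contradiction
    exfalso
    have e1 : (t₁ \ t₂).card = 1 := by omega
    have e2 : (t₂ \ t₁).card = 1 := by omega
    obtain ⟨a, hab'⟩ := Finset.card_eq_one.mp e1
    obtain ⟨c, hcd'⟩ := Finset.card_eq_one.mp e2
    have ha : a ∈ t₁ \ t₂ := by rw [hab']; simp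
    have hc : c ∈ t₂ \ t₁ := by rw [hcd']; simp
    simp only [Finset.mem_sdiff] at ha hc
    have : a = c := by
      have := hsd
      rw [hab', hcd', Finset.sum_singleton, Finset.sum_singleton] at this
      simpa using this
    exact ha.2 (this ▸ hc.1)
  · -- inter = t₁
    have h' : t₁ ∩ t₂ = t₁ :=
      Finset.eq_of_subset_of_card_le Finset.inter_subset_left (by omega)
    have : t₁ ⊆ t₂ := by rw [← h']; exact Finset.inter_subset_right
    exact Finset.eq_of_subset_of_card_le this (by omega) |>.symm ▸ rfl

/-- The sum of a 5-cap is not in the cap. -/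
lemma sum_notMem {n : ℕ} (C : Finset (Fin n → ZMod 2))
    (hC : IsCap (C : Set (Fin n → ZMod 2))) (hcard : C.card = 5)
    (y : Fin n → ZMod 2) (hy : y = C.sum id) : y ∉ C := by
  intro hyC
  have hsum : (C.erase y).sum id = 0 := by
    have h1 : y + (C.erase y).sum id = C.sum id := Finset.add_sum_erase C id hyC
    rw [← hy] at h1
    have h2 : y + (C.erase y).sum id = y + 0 := by rw [add_zero]; exact h1
    exact add_left_cancel h2
  have hce : (C.erase y).card = 4 := by rw [Finset.card_erase_of_mem hyC, hcard]
  obtain ⟨a, ha⟩ : ∃ a, a ∈ C.erase y := Finset.Nonempty.exists_mem (by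
    rw [← Finset.card_pos, hce]; norm_num)
  have hce2 : ((C.erase y).erase a).card = 3 := by
    rw [Finset.card_erase_of_mem ha, hce]
  obtain ⟨b, c, d, hbc, hbd, hcd, habc⟩ := Finset.card_eq_three.mp hce2
  have hinsert : C.erase y = insert a {b, c, d} := by
    rw [← habc, Finset.insert_erase ha]
  have hanotin : a ∉ ({b, c, d} : Finset _) := by
    rw [← habc]; exact Finset.notMem_erase a _
  have hb : b ∈ (C.erase y).erase a := by rw [habc]; simp
  have hc : c ∈ (C.erase y).erase a := by rw [habc]; simp
  have hd : d ∈ (C.erase y).erase a := by rw [habc]; simp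
  have hbC : b ∈ C := Finset.mem_of_mem_erase (Finset.mem_of_mem_erase hb)
  have hcC : c ∈ C := Finset.mem_of_mem_erase (Finset.mem_of_mem_erase hc)
  have hdC : d ∈ C := Finset.mem_of_mem_erase (Finset.mem_of_mem_erase hd)
  have haC : a ∈ C := Finset.mem_of_mem_erase ha
  have hab : a ≠ b := fun h => hanotin (by rw [h]; simp)
  have hac : a ≠ c := fun h => hanotin (by rw [h]; simp)
  have had : a ≠ d := fun h => hanotin (by rw [h]; simp)
  refine hC a haC b hbC c hcC d hdC hab hac had hbc hbd hcd ?_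
  have : (C.erase y).sum id = a + (b + (c + d)) := by
    rw [hinsert, Finset.sum_insert hanotin, Finset.sum_insert (by simp [hbc, hbd]),
      Finset.sum_pair hcd]
    rfl
  rw [hsum] at this
  rw [show a + b + c + d = a + (b + (c + d)) by ring, ← this]

/-- For a 5-element cap `C` with `y` the sum of its elements, every point in the
exclude set of `C ∪ {y}` has multiplicity exactly 2 with respect to `C ∪ {y}`. -/
theorem five_cap_plus_sum_mult_two {n : ℕ} (C : Finset (Fin n → ZMod 2))
    (hC : IsCap (C : Set (Fin n → ZMod 2))) (hcard : C.card = 5)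
    (y : Fin n → ZMod 2) (hy : y = C.sum id) :
    ∀ p ∈ excl (insert y C), mult (insert y C) p = 2 := by
  intro p hp
  have hyC : y ∉ C := sum_notMem C hC hcard y hy
  -- find a 3-subset u of C with sum p
  obtain ⟨t₀, ht₀, hst₀⟩ : ∃ t₀ ∈ (insert y C).powersetCard 3, t₀.sum id = p := by
    simpa [excl, Finset.mem_image] using hp
  rw [Finset.mem_powersetCard] at ht₀
  -- from any 3-subset t of insert y C with y ∈ t, get a complement 3-subset of C
  have compl_sum : ∀ t : Finset (Fin n → ZMod 2), t ⊆ insert y C → t.card = 3 →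
      y ∈ t → (C \ t.erase y) ⊆ C ∧ (C \ t.erase y).card = 3 ∧
        (C \ t.erase y).sum id = t.sum id := by
    intro t hts htc hyt
    have hv : t.erase y ⊆ C := by
      intro x hx
      rcases Finset.mem_insert.mp (hts (Finset.mem_of_mem_erase hx)) with h | h
      · exact absurd h (Finset.ne_of_mem_erase hx)
      · exact h
    have hvc : (t.erase y).card = 2 := by rw [Finset.card_erase_of_mem hyt, htc]
    refine ⟨Finset.sdiff_subset, ?_, ?_⟩
    · rw [Finset.card_sdiff_of_subset hv, hcard, hvc]
    · have h1 : (C \ t.erase y).sum id + (t.erase y).sum id = C.sum id :=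
        Finset.sum_sdiff hv
      have h2 : y + (t.erase y).sum id = t.sum id := Finset.add_sum_erase t id hyt
      have h3 : (C \ t.erase y).sum id = C.sum id + (t.erase y).sum id := vcancel h1
      have h4 : (t.erase y).sum id = t.sum id + y := by
        rw [← h2,
          show y + (t.erase y).sum id + y = (t.erase y).sum id + (y + y) by ring,
          vadd_self, add_zero]
      rw [h3, ← hy, h4]
      rw [show y + (t.sum id + y) = t.sum id + (y + y) by ring, vadd_self, add_zero]
  -- the canonical 3-subset u ⊆ C with sum p
  obtain ⟨u, huC, huc, hus⟩ : ∃ u, u ⊆ C ∧ u.card = 3 ∧ u.sum id = p := by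
    by_cases hyt : y ∈ t₀
    · obtain ⟨h1, h2, h3⟩ := compl_sum t₀ ht₀.1 ht₀.2 hyt
      exact ⟨_, h1, h2, h3.trans hst₀⟩
    · refine ⟨t₀, ?_, ht₀.2, hst₀⟩
      intro x hx
      rcases Finset.mem_insert.mp (ht₀.1 hx) with h | h
      · exact absurd (h ▸ hx) hyt
      · exact h
  have hynotu : y ∉ u := fun h => hyC (huC h)
  -- the filter set equals {u, insert y (C \ u)}
  have key : ((insert y C).powersetCard 3).filter (fun t => t.sum id = p) =
      {u, insert y (C \ u)} := by
    ext t
    simp only [Finset.mem_filter, Finset.mem_powersetCard, Finset.mem_insert,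
      Finset.mem_singleton]
    constructor
    · rintro ⟨⟨hts, htc⟩, htp⟩
      by_cases hyt : y ∈ t
      · right
        obtain ⟨h1, h2, h3⟩ := compl_sum t hts htc hyt
        have : C \ t.erase y = u :=
          three_sum_inj C hC hcard h1 huC h2 huc (by rw [h3, htp, hus])
        have hv : t.erase y ⊆ C := by
          intro x hx
          rcases Finset.mem_insert.mp (hts (Finset.mem_of_mem_erase hx)) with h | h
          · exact absurd h (Finset.ne_of_mem_erase hx)
          · exact h
        have hCu : C \ u = t.erase y := by
          rw [← this, Finset.sdiff_sdiff_self_left,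
            Finset.inter_eq_right.mpr hv]
        rw [hCu, Finset.insert_erase hyt]
      · left
        have htC : t ⊆ C := by
          intro x hx
          rcases Finset.mem_insert.mp (hts hx) with h | h
          · exact absurd (h ▸ hx) hyt
          · exact h
        exact three_sum_inj C hC hcard htC huC htc huc (by rw [htp, hus])
    · rintro (rfl | rfl)
      · exact ⟨⟨huC.trans (Finset.subset_insert y C), huc⟩, hus⟩
      · have hyCu : y ∉ C \ u := fun h => hyC (Finset.mem_sdiff.mp h).1
        refine ⟨⟨?_, ?_⟩, ?_⟩
        · exact Finset.insert_subset_insert y Finset.sdiff_subset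
        · rw [Finset.card_insert_of_notMem hyCu, Finset.card_sdiff_of_subset huC, hcard, huc]
        · rw [Finset.sum_insert hyCu]
          have h1 : (C \ u).sum id + u.sum id = C.sum id := Finset.sum_sdiff huC
          have h2 : (C \ u).sum id = C.sum id + u.sum id := vcancel h1
          show y + (C \ u).sum id = p
          rw [h2, ← hy, hus, ← add_assoc, vadd_self, zero_add]
  have hne : u ≠ insert y (C \ u) := by
    intro h
    exact hynotu (h ▸ Finset.mem_insert_self y (C \ u))
  rw [mult, key, Finset.card_insert_of_notMem (by simpa using hne), Finset.card_singleton]
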